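/- (Deep Sets representation for countable universe) Let C be a countable set and let f be a function taking as input an element x ∈ C together with a finite subset S ⊆ C \ {x}, with values in ℝ, such that f depends on S only as a set (i.e., it is automatically permutation invariant since the input is a set). Then there exist functions φ₁ : C → ℝ, φ₂ : C → ℝ, and ρ : ℝ → ℝ such that for all such (x, S), f(x, S) = ρ(φ₁(x) + Σ_{y ∈ S} φ₂(y)). -/

import Mathlib

open Finset

lemma sum_two_pow_injective : Function.Injective (fun T : Finset ℕ => ∑ n ∈ T, 2 ^ n) := by
  have key : ∀ T : Finset ℕ, Nat.bitIndices (∑ n ∈ T, 2 ^ n) = T.sort (· ≤ ·) := by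
    intro T
    have hs : List.SortedLT (T.sort (· ≤ ·)) :=
      (Finset.sortedLT_sort T)
    have := Nat.bitIndices_twoPowsum hs
    rwa [show ((T.sort (· ≤ ·)).map (fun i => 2 ^ i)).sum = ∑ n ∈ T, 2 ^ n from by
      rw [← Multiset.sum_coe, ← Multiset.map_coe, Finset.sort_eq]
      rfl] at this
  intro T T' h
  simp only at h
  have h2 : T.sort (· ≤ ·) = T'.sort (· ≤ ·) := by rw [← key T, ← key T', h]
  have h3 : T.val = T'.val := by
    rw [← Finset.sort_eq T (· ≤ ·), ← Finset.sort_eq T' (· ≤ ·), h2]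
  exact Finset.val_injective h3

/-- Deep Sets representation over a countable universe: any function of a
product `x` and the finite set `S` of its competitors (with `x ∉ S`) can be
written as `ρ (φ₁ x + ∑_{y ∈ S} φ₂ y)`. -/
theorem stmt3 (C : Type*) [Countable C]
    (f : ∀ x : C, {S : Finset C // x ∉ S} → ℝ) :
    ∃ (φ₁ φ₂ : C → ℝ) (ρ : ℝ → ℝ),
      ∀ (x : C) (S : {S : Finset C // x ∉ S}),
        f x S = ρ (φ₁ x + ∑ y ∈ S.1, φ₂ y) := by
  obtain ⟨c, hc⟩ := Countable.exists_injective_nat C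
  -- encode a pair into a finset of ℕ
  set enc : (Σ x : C, {S : Finset C // x ∉ S}) → Finset ℕ :=
    fun p => insert (2 * c p.1) (p.2.1.image (fun y => 2 * c y + 1)) with henc
  have hencinj : Function.Injective enc := by
    rintro ⟨x, S, hS⟩ ⟨x', S', hS'⟩ h
    simp only [henc] at h
    have hximg : ∀ (x : C) (S : Finset C), 2 * c x ∉ S.image (fun y => 2 * c y + 1) := by
      intro x S hx
      simp only [Finset.mem_image] at hx
      obtain ⟨y, _, hy⟩ := hx
      omega
    have hxx' : x = x' := by
      have : 2 * c x ∈ insert (2 * c x') (S'.image (fun y => 2 * c y + 1)) := by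
        rw [← h]; exact Finset.mem_insert_self _ _
      rcases Finset.mem_insert.1 this with h1 | h1
      · exact hc (by omega)
      · exact absurd h1 (hximg x S')
    subst hxx'
    have himg : S.image (fun y => 2 * c y + 1) = S'.image (fun y => 2 * c y + 1) := by
      have := congrArg (fun T => Finset.erase T (2 * c x)) h
      simpa [Finset.erase_insert (hximg x S), Finset.erase_insert (hximg x S')] using this
    have hSS' : S = S' := by
      apply Finset.image_injective (f := fun y => 2 * c y + 1) ?_ himg
      intro a b hab
      simp only at hab
      exact hc (by omega)
    simp [hSS']
  -- encode into ℕ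
  set encN : (Σ x : C, {S : Finset C // x ∉ S}) → ℕ :=
    fun p => ∑ n ∈ enc p, 2 ^ n with hencN
  have hencNinj : Function.Injective encN := sum_two_pow_injective.comp hencinj
  classical
  refine ⟨fun x => (2 : ℝ) ^ (2 * c x), fun y => (2 : ℝ) ^ (2 * c y + 1),
    fun r => if h : ∃ p : Σ x : C, {S : Finset C // x ∉ S}, ((encN p : ℝ) = r)
      then f h.choose.1 h.choose.2 else 0, ?_⟩
  intro x S
  have hval : ((encN ⟨x, S⟩ : ℕ) : ℝ) = (2 : ℝ) ^ (2 * c x) + ∑ y ∈ S.1, (2 : ℝ) ^ (2 * c y + 1) := by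
    simp only [hencN, henc]
    have hnot : 2 * c x ∉ S.1.image (fun y => 2 * c y + 1) := by
      intro hx
      simp only [Finset.mem_image] at hx
      obtain ⟨y, _, hy⟩ := hx
      omega
    rw [Finset.sum_insert hnot, Finset.sum_image ?_]
    swap
    · intro a _ b _ hab
      simp only at hab
      exact hc (by omega)
    push_cast
    ring
  rw [← hval]
  have hex : ∃ p : Σ x : C, {S : Finset C // x ∉ S}, ((encN p : ℝ) = (encN ⟨x, S⟩ : ℝ)) :=
    ⟨⟨x, S⟩, rfl⟩
  beta_reduce
  rw [dif_pos hex]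
  have hp : hex.choose = ⟨x, S⟩ := by
    apply hencNinj
    exact_mod_cast hex.choose_spec
  rw [hp]
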